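/- Let (X,μ) be a measure space, 3 ≤ q ≤ 4, and let u, r ∈ L^q(X,μ) with u ≥ 0, u + r ≥ 0, and ∫ u^(q-1)·r dμ = 0. Then ‖u+r‖_q² ≤ ‖u‖_q² + ‖u‖_q^(2-q)·( (q-1)·∫ u^(q-2)·r² dμ + (1/3)·(q-1)·(q-2)·∫ u^(q-3)·r³ dμ + (2/q)·∫ |r|^q dμ ). -/

import Mathlib

open MeasureTheory Set

private lemma mono_via_deriv {φ ψ : ℝ → ℝ} {lo hi : ℝ} (h : lo ≤ hi)
    (hd : ∀ s ∈ Set.Icc lo hi, HasDerivAt φ (ψ s) s)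
    (h0 : ∀ s ∈ Set.Ioo lo hi, 0 ≤ ψ s) : φ lo ≤ φ hi := by
  have hmono := monotoneOn_of_deriv_nonneg (convex_Icc lo hi)
    (fun s hs => ((hd s hs).continuousAt).continuousWithinAt)
    (fun s hs => by
      rw [interior_Icc] at hs
      exact ((hd s (Ioo_subset_Icc_self hs)).differentiableAt).differentiableWithinAt)
    (fun s hs => by
      rw [interior_Icc] at hs
      rw [(hd s (Ioo_subset_Icc_self hs)).deriv]
      exact h0 s hs)
  exact hmono (left_mem_Icc.2 h) (right_mem_Icc.2 h) h

private lemma anti_via_deriv {φ ψ : ℝ → ℝ} {lo hi : ℝ} (h : lo ≤ hi)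
    (hd : ∀ s ∈ Set.Icc lo hi, HasDerivAt φ (ψ s) s)
    (h0 : ∀ s ∈ Set.Ioo lo hi, ψ s ≤ 0) : φ hi ≤ φ lo := by
  have hmono := antitoneOn_of_deriv_nonpos (convex_Icc lo hi)
    (fun s hs => ((hd s hs).continuousAt).continuousWithinAt)
    (fun s hs => by
      rw [interior_Icc] at hs
      exact ((hd s (Ioo_subset_Icc_self hs)).differentiableAt).differentiableWithinAt)
    (fun s hs => by
      rw [interior_Icc] at hs
      rw [(hd s (Ioo_subset_Icc_self hs)).deriv]
      exact h0 s hs)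
  exact hmono (left_mem_Icc.2 h) (right_mem_Icc.2 h) h

private lemma rpow_subadd {p x y : ℝ} (hp0 : 0 ≤ p) (hp1 : p ≤ 1) (hx : 0 ≤ x) (hy : 0 ≤ y) :
    (x + y) ^ p ≤ x ^ p + y ^ p := by
  have h := NNReal.rpow_add_le_add_rpow x.toNNReal y.toNNReal hp0 hp1
  rw [← Real.toNNReal_add hx hy] at h
  have h' := NNReal.coe_le_coe.2 h
  push_cast at h'
  rwa [Real.coe_toNNReal _ (by positivity), Real.coe_toNNReal _ hx, Real.coe_toNNReal _ hy] at h'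
private lemma lemA {q : ℝ} (hq3 : 3 ≤ q) (hq4 : q ≤ 4) {a s : ℝ} (ha : 0 ≤ a) (hs : 0 ≤ s) :
    (a + s) ^ (q-2) ≤ a ^ (q-2) + (q-2) * a ^ (q-3) * s + s ^ (q-2) := by
  have h1 : (1:ℝ) ≤ q - 2 := by linarith
  have e3 : q - 2 - 1 = q - 3 := by ring
  have key := mono_via_deriv (h := hs)
    (φ := fun t => a ^ (q-2) + (q-2) * a ^ (q-3) * t + t ^ (q-2) - (a + t) ^ (q-2))
    (ψ := fun t => (q-2) * a ^ (q-3) + (q-2) * t ^ (q-3) - (q-2) * (a + t) ^ (q-3))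
    (fun t _ => by
      have d1 : HasDerivAt (fun t : ℝ => a ^ (q-2) + (q-2) * a ^ (q-3) * t)
          ((q-2) * a ^ (q-3)) t := by
        simpa using ((hasDerivAt_id t).const_mul ((q-2) * a ^ (q-3))).const_add (a ^ (q-2))
      have d2 : HasDerivAt (fun t : ℝ => t ^ (q-2)) ((q-2) * t ^ (q-3)) t := by
        simpa [e3] using Real.hasDerivAt_rpow_const (x := t) (p := q-2) (Or.inr h1)
      have d3 : HasDerivAt (fun t : ℝ => (a + t) ^ (q-2)) ((q-2) * (a + t) ^ (q-3)) t := by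
        have := (Real.hasDerivAt_rpow_const (x := a + t) (p := q-2) (Or.inr h1)).comp t
          ((hasDerivAt_id t).const_add a)
        simpa [Function.comp_def, e3] using this
      exact (d1.add d2).sub d3)
    (fun t ht => by
      show (0:ℝ) ≤ (q-2) * a ^ (q-3) + (q-2) * t ^ (q-3) - (q-2) * (a + t) ^ (q-3)
      have hsub := rpow_subadd (p := q-3) (by linarith) (by linarith) ha ht.1.le
      nlinarith [hsub])
  simp only [mul_zero, add_zero, Real.zero_rpow (show q-2 ≠ 0 by linarith)] at key
  linarith [key]
private lemma lemB {q : ℝ} (hq3 : 3 ≤ q) (hq4 : q ≤ 4) {a s : ℝ} (hs : 0 ≤ s) (hsa : s ≤ a) :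
    (a - s) ^ (q-2) + (q-2) * a ^ (q-3) * s ≤ a ^ (q-2) + s ^ (q-2) := by
  have h1 : (1:ℝ) ≤ q - 2 := by linarith
  have e3 : q - 2 - 1 = q - 3 := by ring
  have key := mono_via_deriv (h := hs)
    (φ := fun t => a ^ (q-2) + t ^ (q-2) - (a - t) ^ (q-2) - (q-2) * a ^ (q-3) * t)
    (ψ := fun t => (q-2) * t ^ (q-3) - (-((q-2) * (a - t) ^ (q-3))) - (q-2) * a ^ (q-3))
    (fun t _ => by
      have d2 : HasDerivAt (fun t : ℝ => a ^ (q-2) + t ^ (q-2)) ((q-2) * t ^ (q-3)) t := by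
        have := Real.hasDerivAt_rpow_const (x := t) (p := q-2) (Or.inr h1)
        simpa [e3] using this.const_add (a ^ (q-2))
      have d3 : HasDerivAt (fun t : ℝ => (a - t) ^ (q-2)) (-((q-2) * (a - t) ^ (q-3))) t := by
        have := (Real.hasDerivAt_rpow_const (x := a - t) (p := q-2) (Or.inr h1)).comp t
          ((hasDerivAt_id t).const_sub a)
        have h' : (q-2) * (a - t) ^ (q - 2 - 1) * (-1) = -((q-2) * (a - t) ^ (q-3)) := by
          rw [e3]; ring
        rw [h'] at this
        exact this
      have d4 : HasDerivAt (fun t : ℝ => (q-2) * a ^ (q-3) * t) ((q-2) * a ^ (q-3)) t := by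
        simpa using (hasDerivAt_id t).const_mul ((q-2) * a ^ (q-3))
      exact (d2.sub d3).sub d4)
    (fun t ht => by
      show (0:ℝ) ≤ (q-2) * t ^ (q-3) - (-((q-2) * (a - t) ^ (q-3))) - (q-2) * a ^ (q-3)
      have hsub := rpow_subadd (p := q-3) (by linarith) (by linarith) ht.1.le
        (sub_nonneg.2 (le_trans ht.2.le hsa))
      rw [add_sub_cancel] at hsub
      nlinarith [hsub])
  simp only [mul_zero, sub_zero, Real.zero_rpow (show q-2 ≠ 0 by linarith)] at key
  linarith [key]

private lemma lemC {q : ℝ} (hq3 : 3 ≤ q) (hq4 : q ≤ 4) {a s : ℝ} (ha : 0 ≤ a) (hs : 0 ≤ s) :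
    (a + s) ^ (q-1) ≤ a ^ (q-1) + (q-1) * a ^ (q-2) * s
      + ((q-1)*(q-2)/2) * a ^ (q-3) * s^2 + s ^ (q-1) := by
  have h1 : (1:ℝ) ≤ q - 1 := by linarith
  have e2 : q - 1 - 1 = q - 2 := by ring
  have key := mono_via_deriv (h := hs)
    (φ := fun t => a ^ (q-1) + (q-1) * a ^ (q-2) * t + ((q-1)*(q-2)/2) * a ^ (q-3) * t^2
      + t ^ (q-1) - (a + t) ^ (q-1))
    (ψ := fun t => (q-1) * a ^ (q-2) + ((q-1)*(q-2)/2) * a ^ (q-3) * (2*t)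
      + (q-1) * t ^ (q-2) - (q-1) * (a + t) ^ (q-2))
    (fun t _ => by
      have d1 : HasDerivAt (fun t : ℝ => a ^ (q-1) + (q-1) * a ^ (q-2) * t)
          ((q-1) * a ^ (q-2)) t := by
        simpa using ((hasDerivAt_id t).const_mul ((q-1) * a ^ (q-2))).const_add (a ^ (q-1))
      have d2 : HasDerivAt (fun t : ℝ => ((q-1)*(q-2)/2) * a ^ (q-3) * t^2)
          (((q-1)*(q-2)/2) * a ^ (q-3) * (2*t)) t := by
        have := (hasDerivAt_pow 2 t).const_mul (((q-1)*(q-2)/2) * a ^ (q-3))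
        refine this.congr_deriv ?_
        push_cast; ring
      have d3 : HasDerivAt (fun t : ℝ => t ^ (q-1)) ((q-1) * t ^ (q-2)) t := by
        simpa [e2] using Real.hasDerivAt_rpow_const (x := t) (p := q-1) (Or.inr h1)
      have d4 : HasDerivAt (fun t : ℝ => (a + t) ^ (q-1)) ((q-1) * (a + t) ^ (q-2)) t := by
        have := (Real.hasDerivAt_rpow_const (x := a + t) (p := q-1) (Or.inr h1)).comp t
          ((hasDerivAt_id t).const_add a)
        simpa [Function.comp_def, e2] using this
      exact (((d1.add d2).add d3).sub d4))
    (fun t ht => by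
      show (0:ℝ) ≤ (q-1) * a ^ (q-2) + ((q-1)*(q-2)/2) * a ^ (q-3) * (2*t)
        + (q-1) * t ^ (q-2) - (q-1) * (a + t) ^ (q-2)
      have hA := lemA hq3 hq4 ha ht.1.le
      nlinarith [hA])
  simp only [mul_zero, add_zero, zero_pow, Real.zero_rpow (show q-1 ≠ 0 by linarith),
    ne_eq, OfNat.ofNat_ne_zero, not_false_eq_true] at key
  linarith [key]

private lemma lemD {q : ℝ} (hq3 : 3 ≤ q) (hq4 : q ≤ 4) {a s : ℝ} (hs : 0 ≤ s) (hsa : s ≤ a) :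
    a ^ (q-1) - (q-1) * a ^ (q-2) * s + ((q-1)*(q-2)/2) * a ^ (q-3) * s^2
      ≤ s ^ (q-1) + (a - s) ^ (q-1) := by
  have h1 : (1:ℝ) ≤ q - 1 := by linarith
  have e2 : q - 1 - 1 = q - 2 := by ring
  have key := mono_via_deriv (h := hs)
    (φ := fun t => t ^ (q-1) + (a - t) ^ (q-1) - a ^ (q-1) + (q-1) * a ^ (q-2) * t
      - ((q-1)*(q-2)/2) * a ^ (q-3) * t^2)
    (ψ := fun t => ((q-1) * t ^ (q-2) + (-((q-1) * (a - t) ^ (q-2))) + (q-1) * a ^ (q-2))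
      - ((q-1)*(q-2)/2) * a ^ (q-3) * (2*t))
    (fun t _ => by
      have d1 : HasDerivAt (fun t : ℝ => t ^ (q-1)) ((q-1) * t ^ (q-2)) t := by
        simpa [e2] using Real.hasDerivAt_rpow_const (x := t) (p := q-1) (Or.inr h1)
      have d2 : HasDerivAt (fun t : ℝ => (a - t) ^ (q-1)) (-((q-1) * (a - t) ^ (q-2))) t := by
        have := (Real.hasDerivAt_rpow_const (x := a - t) (p := q-1) (Or.inr h1)).comp t
          ((hasDerivAt_id t).const_sub a)
        have h' : (q-1) * (a - t) ^ (q - 1 - 1) * (-1) = -((q-1) * (a - t) ^ (q-2)) := by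
          rw [e2]; ring
        rw [h'] at this
        exact this
      have d3 : HasDerivAt (fun t : ℝ => t ^ (q-1) + (a - t) ^ (q-1) - a ^ (q-1)
          + (q-1) * a ^ (q-2) * t)
          ((q-1) * t ^ (q-2) + (-((q-1) * (a - t) ^ (q-2))) + (q-1) * a ^ (q-2)) t := by
        have dlin : HasDerivAt (fun t : ℝ => (q-1) * a ^ (q-2) * t) ((q-1) * a ^ (q-2)) t := by
          simpa using (hasDerivAt_id t).const_mul ((q-1) * a ^ (q-2))
        have := ((d1.add d2).sub (hasDerivAt_const t (a ^ (q-1)))).add dlin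
        refine this.congr_deriv ?_
        ring
      have d4 : HasDerivAt (fun t : ℝ => ((q-1)*(q-2)/2) * a ^ (q-3) * t^2)
          (((q-1)*(q-2)/2) * a ^ (q-3) * (2*t)) t := by
        have := (hasDerivAt_pow 2 t).const_mul (((q-1)*(q-2)/2) * a ^ (q-3))
        refine this.congr_deriv ?_
        push_cast; ring
      exact d3.sub d4)
    (fun t ht => by
      show (0:ℝ) ≤ ((q-1) * t ^ (q-2) + (-((q-1) * (a - t) ^ (q-2))) + (q-1) * a ^ (q-2))
        - ((q-1)*(q-2)/2) * a ^ (q-3) * (2*t)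
      have hB := lemB hq3 hq4 ht.1.le (le_trans ht.2.le hsa)
      nlinarith [hB])
  simp only [mul_zero, add_zero, sub_zero, zero_pow, Real.zero_rpow (show q-1 ≠ 0 by linarith),
    ne_eq, OfNat.ofNat_ne_zero, not_false_eq_true] at key
  linarith [key]
private lemma lemE {q : ℝ} (hq3 : 3 ≤ q) (hq4 : q ≤ 4) {a s : ℝ} (ha : 0 ≤ a) (hs : 0 ≤ s) :
    (a + s) ^ q ≤ a ^ q + q * a ^ (q-1) * s + (q*(q-1)/2) * a ^ (q-2) * s^2
      + (q*(q-1)*(q-2)/6) * a ^ (q-3) * s^3 + s ^ q := by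
  have h1 : (1:ℝ) ≤ q := by linarith
  have e1 : q - 1 = q - 1 := rfl
  have key := mono_via_deriv (h := hs)
    (φ := fun t => a ^ q + q * a ^ (q-1) * t + (q*(q-1)/2) * a ^ (q-2) * t^2
      + (q*(q-1)*(q-2)/6) * a ^ (q-3) * t^3 + t ^ q - (a + t) ^ q)
    (ψ := fun t => q * a ^ (q-1) + (q*(q-1)/2) * a ^ (q-2) * (2*t)
      + (q*(q-1)*(q-2)/6) * a ^ (q-3) * (3*t^2) + q * t ^ (q-1) - q * (a + t) ^ (q-1))
    (fun t _ => by
      have d1 : HasDerivAt (fun t : ℝ => a ^ q + q * a ^ (q-1) * t) (q * a ^ (q-1)) t := by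
        simpa using ((hasDerivAt_id t).const_mul (q * a ^ (q-1))).const_add (a ^ q)
      have d2 : HasDerivAt (fun t : ℝ => (q*(q-1)/2) * a ^ (q-2) * t^2)
          ((q*(q-1)/2) * a ^ (q-2) * (2*t)) t := by
        have := (hasDerivAt_pow 2 t).const_mul ((q*(q-1)/2) * a ^ (q-2))
        refine this.congr_deriv ?_; push_cast; ring
      have d3 : HasDerivAt (fun t : ℝ => (q*(q-1)*(q-2)/6) * a ^ (q-3) * t^3)
          ((q*(q-1)*(q-2)/6) * a ^ (q-3) * (3*t^2)) t := by
        have := (hasDerivAt_pow 3 t).const_mul ((q*(q-1)*(q-2)/6) * a ^ (q-3))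
        refine this.congr_deriv ?_; push_cast; ring
      have d4 : HasDerivAt (fun t : ℝ => t ^ q) (q * t ^ (q-1)) t :=
        Real.hasDerivAt_rpow_const (x := t) (p := q) (Or.inr h1)
      have d5 : HasDerivAt (fun t : ℝ => (a + t) ^ q) (q * (a + t) ^ (q-1)) t := by
        have := (Real.hasDerivAt_rpow_const (x := a + t) (p := q) (Or.inr h1)).comp t
          ((hasDerivAt_id t).const_add a)
        simpa [Function.comp_def] using this
      exact ((((d1.add d2).add d3).add d4).sub d5))
    (fun t ht => by
      show (0:ℝ) ≤ q * a ^ (q-1) + (q*(q-1)/2) * a ^ (q-2) * (2*t)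
        + (q*(q-1)*(q-2)/6) * a ^ (q-3) * (3*t^2) + q * t ^ (q-1) - q * (a + t) ^ (q-1)
      have hC := lemC hq3 hq4 ha ht.1.le
      nlinarith [hC])
  simp only [mul_zero, add_zero, zero_pow, Real.zero_rpow (show q ≠ 0 by linarith),
    ne_eq, OfNat.ofNat_ne_zero, not_false_eq_true] at key
  linarith [key]

private lemma lemF {q : ℝ} (hq3 : 3 ≤ q) (hq4 : q ≤ 4) {a s : ℝ} (hs : 0 ≤ s) (hsa : s ≤ a) :
    (a - s) ^ q ≤ a ^ q - q * a ^ (q-1) * s + (q*(q-1)/2) * a ^ (q-2) * s^2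
      - (q*(q-1)*(q-2)/6) * a ^ (q-3) * s^3 + s ^ q := by
  have h1 : (1:ℝ) ≤ q := by linarith
  have key := mono_via_deriv (h := hs)
    (φ := fun t => a ^ q - q * a ^ (q-1) * t + (q*(q-1)/2) * a ^ (q-2) * t^2
      - (q*(q-1)*(q-2)/6) * a ^ (q-3) * t^3 + t ^ q - (a - t) ^ q)
    (ψ := fun t => (-(q * a ^ (q-1)) + (q*(q-1)/2) * a ^ (q-2) * (2*t)
      - (q*(q-1)*(q-2)/6) * a ^ (q-3) * (3*t^2) + q * t ^ (q-1)) - (-(q * (a - t) ^ (q-1))))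
    (fun t _ => by
      have d1 : HasDerivAt (fun t : ℝ => a ^ q - q * a ^ (q-1) * t) (-(q * a ^ (q-1))) t := by
        simpa using ((hasDerivAt_id t).const_mul (q * a ^ (q-1))).const_sub (a ^ q)
      have d2 : HasDerivAt (fun t : ℝ => (q*(q-1)/2) * a ^ (q-2) * t^2)
          ((q*(q-1)/2) * a ^ (q-2) * (2*t)) t := by
        have := (hasDerivAt_pow 2 t).const_mul ((q*(q-1)/2) * a ^ (q-2))
        refine this.congr_deriv ?_; push_cast; ring
      have d3 : HasDerivAt (fun t : ℝ => (q*(q-1)*(q-2)/6) * a ^ (q-3) * t^3)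
          ((q*(q-1)*(q-2)/6) * a ^ (q-3) * (3*t^2)) t := by
        have := (hasDerivAt_pow 3 t).const_mul ((q*(q-1)*(q-2)/6) * a ^ (q-3))
        refine this.congr_deriv ?_; push_cast; ring
      have d4 : HasDerivAt (fun t : ℝ => t ^ q) (q * t ^ (q-1)) t :=
        Real.hasDerivAt_rpow_const (x := t) (p := q) (Or.inr h1)
      have d5 : HasDerivAt (fun t : ℝ => (a - t) ^ q) (-(q * (a - t) ^ (q-1))) t := by
        have := (Real.hasDerivAt_rpow_const (x := a - t) (p := q) (Or.inr h1)).comp t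
          ((hasDerivAt_id t).const_sub a)
        have h' : q * (a - t) ^ (q - 1) * (-1) = -(q * (a - t) ^ (q-1)) := by ring
        rw [h'] at this
        exact this
      exact ((((d1.add d2).sub d3).add d4).sub d5))
    (fun t ht => by
      show (0:ℝ) ≤ (-(q * a ^ (q-1)) + (q*(q-1)/2) * a ^ (q-2) * (2*t)
        - (q*(q-1)*(q-2)/6) * a ^ (q-3) * (3*t^2) + q * t ^ (q-1)) - (-(q * (a - t) ^ (q-1)))
      have hD := lemD hq3 hq4 ht.1.le (le_trans ht.2.le hsa)
      nlinarith [hD])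
  simp only [mul_zero, add_zero, sub_zero, zero_pow, Real.zero_rpow (show q ≠ 0 by linarith),
    ne_eq, OfNat.ofNat_ne_zero, not_false_eq_true] at key
  linarith [key]

private lemma pointwise_bound {q : ℝ} (hq3 : 3 ≤ q) (hq4 : q ≤ 4) {a b : ℝ} (ha : 0 ≤ a)
    (hab : 0 ≤ a + b) :
    (a + b) ^ q ≤ a ^ q + q * (a ^ (q-1) * b) + (q*(q-1)/2) * (a ^ (q-2) * b^2)
      + (q*(q-1)*(q-2)/6) * (a ^ (q-3) * b^3) + |b| ^ q := by
  rcases le_or_gt 0 b with hb | hb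
  · have h := lemE hq3 hq4 ha hb
    rw [abs_of_nonneg hb]
    linarith [h]
  · have hs0 : 0 ≤ -b := by linarith
    have hsa : -b ≤ a := by linarith
    have h := lemF hq3 hq4 hs0 hsa
    rw [abs_of_neg hb]
    rw [show a - -b = a + b by ring] at h
    nlinarith [h]
private lemma tangent_line {θ t s : ℝ} (hθ0 : 0 < θ) (hθ1 : θ ≤ 1) (ht : 0 < t) (hs : 0 ≤ s) :
    s ^ θ ≤ t ^ θ + θ * t ^ (θ - 1) * (s - t) := by
  rcases hs.eq_or_lt with rfl | hs0
  · rw [Real.zero_rpow hθ0.ne']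
    have h1 : t ^ (θ-1) * t = t ^ θ := by
      rw [Real.rpow_sub ht, Real.rpow_one, div_mul_cancel₀ _ ht.ne']
    nlinarith [Real.rpow_nonneg ht.le θ]
  rcases le_or_gt t s with hts | hst
  · have key := mono_via_deriv (h := hts)
      (φ := fun x => t ^ θ + θ * t ^ (θ-1) * (x - t) - x ^ θ)
      (ψ := fun x => θ * t ^ (θ-1) - θ * x ^ (θ-1))
      (fun x hx => by
        have hx0 : 0 < x := lt_of_lt_of_le ht hx.1
        have d1 : HasDerivAt (fun x : ℝ => t ^ θ + θ * t ^ (θ-1) * (x - t))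
            (θ * t ^ (θ-1)) x := by
          simpa using (((hasDerivAt_id x).sub_const t).const_mul (θ * t ^ (θ-1))).const_add (t ^ θ)
        have d2 : HasDerivAt (fun x : ℝ => x ^ θ) (θ * x ^ (θ-1)) x :=
          Real.hasDerivAt_rpow_const (Or.inl hx0.ne')
        exact d1.sub d2)
      (fun x hx => by
        show (0:ℝ) ≤ θ * t ^ (θ-1) - θ * x ^ (θ-1)
        have := Real.rpow_le_rpow_of_nonpos ht hx.1.le (by linarith : θ - 1 ≤ 0)
        nlinarith [this])
    simp only [sub_self, mul_zero, add_zero] at key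
    linarith [key]
  · have key := anti_via_deriv (h := hst.le)
      (φ := fun x => t ^ θ + θ * t ^ (θ-1) * (x - t) - x ^ θ)
      (ψ := fun x => θ * t ^ (θ-1) - θ * x ^ (θ-1))
      (fun x hx => by
        have hx0 : 0 < x := lt_of_lt_of_le hs0 hx.1
        have d1 : HasDerivAt (fun x : ℝ => t ^ θ + θ * t ^ (θ-1) * (x - t))
            (θ * t ^ (θ-1)) x := by
          simpa using (((hasDerivAt_id x).sub_const t).const_mul (θ * t ^ (θ-1))).const_add (t ^ θ)
        have d2 : HasDerivAt (fun x : ℝ => x ^ θ) (θ * x ^ (θ-1)) x :=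
          Real.hasDerivAt_rpow_const (Or.inl hx0.ne')
        exact d1.sub d2)
      (fun x hx => by
        show θ * t ^ (θ-1) - θ * x ^ (θ-1) ≤ 0
        have := Real.rpow_le_rpow_of_nonpos (lt_trans hs0 hx.1) hx.2.le (by linarith : θ - 1 ≤ 0)
        nlinarith [this])
    simp only [sub_self, mul_zero, add_zero] at key
    linarith [key]
theorem lq_norm_sq_expansion_q_three_four {X : Type*} [MeasurableSpace X]
    (μ : Measure X) (q : ℝ) (hq3 : 3 ≤ q) (hq4 : q ≤ 4)
    (u r : X → ℝ)
    (hu : MemLp u (ENNReal.ofReal q) μ) (hr : MemLp r (ENNReal.ofReal q) μ)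
    (hu0 : ∀ x, 0 ≤ u x) (hur : ∀ x, 0 ≤ u x + r x)
    (hune : ¬ u =ᵐ[μ] 0)
    (horth : ∫ x, (u x) ^ (q - 1) * r x ∂μ = 0) :
    (eLpNorm (u + r) (ENNReal.ofReal q) μ).toReal ^ 2
      ≤ (eLpNorm u (ENNReal.ofReal q) μ).toReal ^ 2
        + (eLpNorm u (ENNReal.ofReal q) μ).toReal ^ (2 - q)
          * ((q - 1) * ∫ x, (u x) ^ (q - 2) * (r x) ^ 2 ∂μ
             + (1 / 3) * (q - 1) * (q - 2) * ∫ x, (u x) ^ (q - 3) * (r x) ^ 3 ∂μ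
             + (2 / q) * ∫ x, |r x| ^ q ∂μ) := by
  have hq0 : (0:ℝ) < q := by linarith
  set p := ENNReal.ofReal q with hp
  have hp0 : p ≠ 0 := by
    simp only [hp, Ne, ENNReal.ofReal_eq_zero, not_le]; linarith
  have hpt : p ≠ ⊤ := ENNReal.ofReal_ne_top
  have hptr : p.toReal = q := ENNReal.toReal_ofReal hq0.le
  have hv : MemLp (u + r) p μ := hu.add hr
  -- integrability of the various products
  have hdom : ∀ (e : ℝ), 0 ≤ e → ∀ k : ℕ, e + k = q →
      ∀ x, |u x ^ e * r x ^ k| ≤ u x ^ q + |r x| ^ q := by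
    intro e he k hek x
    have hm0 : (0:ℝ) ≤ max (u x) |r x| := le_trans (abs_nonneg _) (le_max_right _ _)
    have h1 : |u x ^ e * r x ^ k| = u x ^ e * |r x| ^ k := by
      rw [abs_mul, abs_of_nonneg (Real.rpow_nonneg (hu0 x) _), abs_pow]
    have h2 : u x ^ e ≤ max (u x) |r x| ^ e :=
      Real.rpow_le_rpow (hu0 x) (le_max_left _ _) he
    have h3 : |r x| ^ k ≤ max (u x) |r x| ^ k :=
      pow_le_pow_left₀ (abs_nonneg _) (le_max_right _ _) k
    have h4 : max (u x) |r x| ^ e * max (u x) |r x| ^ k ≤ u x ^ q + |r x| ^ q := by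
      have hmm : max (u x) |r x| ^ e * max (u x) |r x| ^ k = max (u x) |r x| ^ q := by
        rw [← Real.rpow_natCast (max (u x) |r x|) k, ← Real.rpow_add' hm0 (by rw [hek]; linarith)]
        rw [hek]
      rw [hmm]
      rcases max_cases (u x) |r x| with ⟨hmax, _⟩ | ⟨hmax, _⟩ <;> rw [hmax]
      · nlinarith [Real.rpow_nonneg (abs_nonneg (r x)) q]
      · nlinarith [Real.rpow_nonneg (hu0 x) q]
    calc |u x ^ e * r x ^ k| = u x ^ e * |r x| ^ k := h1
      _ ≤ max (u x) |r x| ^ e * max (u x) |r x| ^ k := by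
          apply mul_le_mul h2 h3 (by positivity) (by positivity)
      _ ≤ u x ^ q + |r x| ^ q := h4
  have hmeas : ∀ (e : ℝ), 0 ≤ e → ∀ k : ℕ,
      AEStronglyMeasurable (fun x => u x ^ e * r x ^ k) μ := by
    intro e he k
    exact ((Real.continuous_rpow_const he).comp_aestronglyMeasurable
      hu.aestronglyMeasurable).mul
      ((continuous_pow k).comp_aestronglyMeasurable hr.aestronglyMeasurable)
  have int_uq : Integrable (fun x => u x ^ q) μ := by
    have h := hu.integrable_norm_rpow hp0 hpt
    rw [hptr] at h
    exact h.congr (Filter.Eventually.of_forall fun x => by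
      simp [Real.norm_eq_abs, abs_of_nonneg (hu0 x)])
  have int_rq : Integrable (fun x => |r x| ^ q) μ := by
    have h := hr.integrable_norm_rpow hp0 hpt
    rw [hptr] at h
    exact h.congr (Filter.Eventually.of_forall fun x => by simp [Real.norm_eq_abs])
  have int_vq : Integrable (fun x => (u x + r x) ^ q) μ := by
    have h := hv.integrable_norm_rpow hp0 hpt
    rw [hptr] at h
    exact h.congr (Filter.Eventually.of_forall fun x => by
      simp [Real.norm_eq_abs, abs_of_nonneg (hur x)])
  have int_mix : ∀ (e : ℝ), 0 ≤ e → ∀ k : ℕ, e + k = q →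
      Integrable (fun x => u x ^ e * r x ^ k) μ := by
    intro e he k hek
    refine Integrable.mono' (int_uq.add int_rq) (hmeas e he k)
      (Filter.Eventually.of_forall fun x => ?_)
    rw [Real.norm_eq_abs]
    exact hdom e he k hek x
  have int_f1 : Integrable (fun x => u x ^ (q-1) * r x ^ (1:ℕ)) μ :=
    int_mix (q-1) (by linarith) 1 (by push_cast; ring)
  have int_f2 : Integrable (fun x => u x ^ (q-2) * r x ^ (2:ℕ)) μ :=
    int_mix (q-2) (by linarith) 2 (by push_cast; ring)
  have int_f3 : Integrable (fun x => u x ^ (q-3) * r x ^ (3:ℕ)) μ :=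
    int_mix (q-3) (by linarith) 3 (by push_cast; ring)
  -- the integrated expansion bound
  set Iu := ∫ x, u x ^ q ∂μ with hIu
  set Iv := ∫ x, (u x + r x) ^ q ∂μ with hIv
  set J2 := ∫ x, u x ^ (q-2) * r x ^ 2 ∂μ with hJ2
  set J3 := ∫ x, u x ^ (q-3) * r x ^ 3 ∂μ with hJ3
  set Jq := ∫ x, |r x| ^ q ∂μ with hJq
  set S := Iu + (q*(q-1)/2) * J2 + (q*(q-1)*(q-2)/6) * J3 + Jq with hS
  have hint : Iv ≤ S := by
    have hle : ∀ x, (u x + r x) ^ q ≤ u x ^ q + q * (u x ^ (q-1) * r x ^ (1:ℕ))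
        + (q*(q-1)/2) * (u x ^ (q-2) * r x ^ (2:ℕ))
        + (q*(q-1)*(q-2)/6) * (u x ^ (q-3) * r x ^ (3:ℕ)) + |r x| ^ q := fun x => by
      simpa [pow_one] using pointwise_bound hq3 hq4 (hu0 x) (hur x)
    have ig1 : Integrable (fun x => q * (u x ^ (q-1) * r x ^ (1:ℕ))) μ := by
      exact int_f1.const_mul q
    have ig2 : Integrable (fun x => (q*(q-1)/2) * (u x ^ (q-2) * r x ^ (2:ℕ))) μ := by
      exact int_f2.const_mul _
    have ig3 : Integrable (fun x => (q*(q-1)*(q-2)/6) * (u x ^ (q-3) * r x ^ (3:ℕ))) μ := by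
      exact int_f3.const_mul _
    have i1 : Integrable (fun x => u x ^ q + q * (u x ^ (q-1) * r x ^ (1:ℕ))) μ := by
      exact int_uq.add ig1
    have i2 : Integrable (fun x => u x ^ q + q * (u x ^ (q-1) * r x ^ (1:ℕ))
        + (q*(q-1)/2) * (u x ^ (q-2) * r x ^ (2:ℕ))) μ := by
      exact i1.add ig2
    have i3 : Integrable (fun x => u x ^ q + q * (u x ^ (q-1) * r x ^ (1:ℕ))
        + (q*(q-1)/2) * (u x ^ (q-2) * r x ^ (2:ℕ))
        + (q*(q-1)*(q-2)/6) * (u x ^ (q-3) * r x ^ (3:ℕ))) μ := by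
      exact i2.add ig3
    have hrhs : Integrable (fun x => u x ^ q + q * (u x ^ (q-1) * r x ^ (1:ℕ))
        + (q*(q-1)/2) * (u x ^ (q-2) * r x ^ (2:ℕ))
        + (q*(q-1)*(q-2)/6) * (u x ^ (q-3) * r x ^ (3:ℕ)) + |r x| ^ q) μ := by
      exact i3.add int_rq
    have h := integral_mono int_vq hrhs hle
    rw [integral_add i3 int_rq, integral_add i2 ig3, integral_add i1 ig2,
        integral_add int_uq ig1,
        integral_const_mul q, integral_const_mul, integral_const_mul] at h
    have hI1 : ∫ x, u x ^ (q-1) * r x ^ (1:ℕ) ∂μ = 0 := by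
      simpa [pow_one] using horth
    rw [hI1] at h
    rw [hS]
    linarith [h]
  -- express the norms as integrals
  have hIu0 : 0 ≤ Iu := integral_nonneg fun x => Real.rpow_nonneg (hu0 x) _
  have hIv0 : 0 ≤ Iv := integral_nonneg fun x => Real.rpow_nonneg (hur x) _
  have hNu : (eLpNorm u p μ).toReal = Iu ^ q⁻¹ := by
    rw [hu.eLpNorm_eq_integral_rpow_norm hp0 hpt,
      ENNReal.toReal_ofReal (Real.rpow_nonneg (integral_nonneg fun x => by positivity) _), hptr]
    congr 1
    exact integral_congr_ae (Filter.Eventually.of_forall fun x => by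
      simp [Real.norm_eq_abs, abs_of_nonneg (hu0 x)])
  have hNv : (eLpNorm (u + r) p μ).toReal = Iv ^ q⁻¹ := by
    rw [hv.eLpNorm_eq_integral_rpow_norm hp0 hpt,
      ENNReal.toReal_ofReal (Real.rpow_nonneg (integral_nonneg fun x => by positivity) _), hptr]
    congr 1
    exact integral_congr_ae (Filter.Eventually.of_forall fun x => by
      simp [Real.norm_eq_abs, abs_of_nonneg (hur x)])
  have hNpos : 0 < (eLpNorm u p μ).toReal :=
    ENNReal.toReal_pos
      (fun h => hune ((eLpNorm_eq_zero_iff hu.aestronglyMeasurable hp0).mp h))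
      hu.eLpNorm_ne_top
  have hIupos : 0 < Iu := by
    rcases (eq_or_lt_of_le hIu0).imp_left Eq.symm with h | h
    · exfalso
      have hIuz : Iu = 0 := h
      rw [hNu, hIuz, Real.zero_rpow (inv_ne_zero hq0.ne')] at hNpos
      exact lt_irrefl 0 hNpos
    · exact h
  -- the concavity (tangent line) step
  set θ := 2 / q with hθ
  have hθ0 : 0 < θ := by positivity
  have hθ1 : θ ≤ 1 := by rw [hθ, div_le_one hq0]; linarith
  have h1 : Iv ^ θ ≤ S ^ θ := Real.rpow_le_rpow hIv0 hint hθ0.le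
  have h2 : S ^ θ ≤ Iu ^ θ + θ * Iu ^ (θ-1) * (S - Iu) :=
    tangent_line hθ0 hθ1 hIupos (hIv0.trans hint)
  have e1 : (eLpNorm (u + r) p μ).toReal ^ 2 = Iv ^ θ := by
    rw [hNv, ← Real.rpow_natCast (Iv ^ q⁻¹) 2, ← Real.rpow_mul hIv0]
    congr 1
    rw [hθ]; push_cast; ring
  have e2 : (eLpNorm u p μ).toReal ^ 2 = Iu ^ θ := by
    rw [hNu, ← Real.rpow_natCast (Iu ^ q⁻¹) 2, ← Real.rpow_mul hIu0]
    congr 1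
    rw [hθ]; push_cast; ring
  have e3 : (eLpNorm u p μ).toReal ^ (2-q) = Iu ^ (θ-1) := by
    rw [hNu, ← Real.rpow_mul hIu0]
    congr 1
    rw [hθ]; field_simp
  rw [e1, e2, e3]
  calc Iv ^ θ ≤ S ^ θ := h1
    _ ≤ Iu ^ θ + θ * Iu ^ (θ-1) * (S - Iu) := h2
    _ = Iu ^ θ + Iu ^ (θ-1) * ((q-1) * J2 + (1/3) * (q-1) * (q-2) * J3 + (2/q) * Jq) := by
        rw [hS, hθ]; field_simp; ring
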